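/- arXiv:1506.06111 — 2 statements merged into one kernel-verified Lean document; each statement's English description precedes it below -/
import Mathlib

section
/- With 𝒟 as in the previous statement, if β(ζ) = c₁(1,i)ᵀ e^{+θK(ζ)} + c₂(1,−i)ᵀ e^{−θK(ζ)} with θ = ϑ_♯/(|λ_♯||𝔷|) > 0 and K(ζ) = ∫₀^ζ κ(s) ds is an L²(R; C²) solution of 𝒟β = 0, then c₁ = 0; i.e., the L² kernel of 𝒟 is one-dimensional, spanned by (1,−i)ᵀ e^{−θK(ζ)}. -/
open Matrix MeasureTheory Filter

/-- The Pauli matrix `σ₁ = [[0,1],[1,0]]`. -/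
noncomputable def sigma1 : Matrix (Fin 2) (Fin 2) ℂ := !![0, 1; 1, 0]

/-- The Pauli matrix `σ₃ = [[1,0],[0,−1]]`. -/
noncomputable def sigma3 : Matrix (Fin 2) (Fin 2) ℂ := !![1, 0; 0, -1]

/-- with `𝒟α = −i|λ♯||𝔷| σ₃ α' + ϑ♯ κ σ₁ α` as before (`λ♯ ≠ 0`, `ϑ♯ > 0`,
`𝔷 ≠ 0`, `κ` continuous with `κ → ±κ∞`, `κ∞ > 0`), if
`β(ζ) = c₁(1,i)ᵀ e^{θK(ζ)} + c₂(1,−i)ᵀ e^{−θK(ζ)}` with `θ = ϑ♯/(|λ♯||𝔷|)` and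
`K(ζ) = ∫₀^ζ κ`, is an `L²(ℝ; ℂ²)` solution of `𝒟β = 0`, then `c₁ = 0`;
i.e. the `L²` kernel of `𝒟` is spanned by `(1,−i)ᵀ e^{−θK}`. -/
theorem dirac_kernel_coefficient_vanishes
    (lamSharp fz : ℂ) (hlam : lamSharp ≠ 0) (hfz : fz ≠ 0)
    (ϑ : ℝ) (hϑ : 0 < ϑ)
    (κ : ℝ → ℝ) (hκcont : Continuous κ)
    (κinf : ℝ) (hκinf : 0 < κinf)
    (htop : Tendsto κ atTop (nhds κinf))
    (hbot : Tendsto κ atBot (nhds (-κinf)))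
    (c₁ c₂ : ℂ) :
    let θ : ℝ := ϑ / (‖lamSharp‖ * ‖fz‖)
    let K : ℝ → ℝ := fun ζ => ∫ s in (0:ℝ)..ζ, κ s
    let β : ℝ → (Fin 2 → ℂ) := fun ζ =>
      c₁ • (Real.exp (θ * K ζ) • ![1, Complex.I])
        + c₂ • (Real.exp (-(θ * K ζ)) • ![1, -Complex.I])
    (∀ ζ : ℝ,
      (-Complex.I * ((‖lamSharp‖ * ‖fz‖ : ℝ) : ℂ)) •
          sigma3.mulVec (deriv β ζ)
        + ((ϑ * κ ζ : ℝ) : ℂ) • sigma1.mulVec (β ζ) = 0) →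
    MemLp β 2 volume → c₁ = 0 := by
  intro θ K β _hode hL2
  by_contra hc₁
  have habs : 0 < ‖lamSharp‖ * ‖fz‖ :=
    mul_pos (norm_pos_iff.mpr hlam) (norm_pos_iff.mpr hfz)
  have hθ : 0 < θ := div_pos hϑ habs
  -- κ is eventually ≥ κinf/2
  obtain ⟨A, hA⟩ : ∃ A : ℝ, ∀ x ≥ A, κinf / 2 ≤ κ x := by
    have := htop.eventually (eventually_ge_nhds (by linarith : κinf / 2 < κinf))
    rw [eventually_atTop] at this
    exact this
  -- K tends to atTop
  have hKgrow : ∀ ζ ≥ A, K A + (ζ - A) * (κinf / 2) ≤ K ζ := by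
    intro ζ hζ
    have hint : ∀ a b : ℝ, IntervalIntegrable κ volume a b :=
      fun a b => hκcont.intervalIntegrable a b
    have hsplit : K A + ∫ s in A..ζ, κ s = K ζ :=
      intervalIntegral.integral_add_adjacent_intervals (hint 0 A) (hint A ζ)
    have hmono : (ζ - A) * (κinf / 2) ≤ ∫ s in A..ζ, κ s := by
      have h1 : (∫ _ in A..ζ, (κinf / 2 : ℝ)) ≤ ∫ s in A..ζ, κ s := by
        apply intervalIntegral.integral_mono_on hζ (intervalIntegrable_const) (hint A ζ)
        intro x hx
        exact hA x hx.1
      have h2 : (ζ - A) * (κinf / 2) = κinf * (ζ - A) / 2 := by ring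
      rw [h2]
      simpa [intervalIntegral.integral_const, smul_eq_mul, mul_comm] using h1
    linarith
  have hK : Tendsto K atTop atTop := by
    apply tendsto_atTop_mono' atTop _ (tendsto_atTop_add_const_left _ (K A)
      ((tendsto_atTop_add_const_right atTop (-A) tendsto_id).atTop_mul_const
        (by linarith : (0:ℝ) < κinf / 2)))
    filter_upwards [eventually_ge_atTop A] with ζ hζ
    have := hKgrow ζ hζ
    simpa [sub_eq_add_neg] using this
  have hθK : Tendsto (fun ζ => θ * K ζ) atTop atTop := hK.const_mul_atTop hθ
  have hexp : Tendsto (fun ζ => Real.exp (θ * K ζ)) atTop atTop :=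
    Real.tendsto_exp_atTop.comp hθK
  have hexp' : Tendsto (fun ζ => Real.exp (-(θ * K ζ))) atTop (nhds 0) :=
    Real.tendsto_exp_atBot.comp (tendsto_neg_atBot_iff.mpr hθK)
  -- lower bound on the norm of the first component
  have hnorm0 : ∀ ζ : ℝ, ‖c₁‖ * Real.exp (θ * K ζ)
      - ‖c₂‖ * Real.exp (-(θ * K ζ)) ≤ ‖β ζ‖ := by
    intro ζ
    set x : ℂ := (Real.exp (θ * K ζ) : ℂ) with hx
    set y : ℂ := (Real.exp (-(θ * K ζ)) : ℂ) with hy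
    have hβ0 : β ζ 0 = c₁ * x + c₂ * y := by
      simp [β, Pi.smul_apply, Matrix.cons_val_zero, smul_eq_mul, hx, hy]
    have h1 : ‖β ζ 0‖ ≤ ‖β ζ‖ := norm_le_pi_norm (β ζ) 0
    have key : ‖c₁ * x‖ - ‖c₂ * y‖ ≤ ‖c₁ * x + c₂ * y‖ := by
      simpa [sub_neg_eq_add, norm_neg] using norm_sub_norm_le (c₁ * x) (-(c₂ * y))
    have hxe : ‖c₁ * x‖ = ‖c₁‖ * Real.exp (θ * K ζ) := by
      rw [hx, norm_mul, Complex.norm_real, Real.norm_eq_abs,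
        abs_of_pos (Real.exp_pos _)]
    have hye : ‖c₂ * y‖ = ‖c₂‖ * Real.exp (-(θ * K ζ)) := by
      rw [hy, norm_mul, Complex.norm_real, Real.norm_eq_abs,
        abs_of_pos (Real.exp_pos _)]
    rw [hxe, hye] at key
    rw [← hβ0] at key
    linarith
  -- ‖β‖ tends to atTop
  have hβtop : Tendsto (fun ζ => ‖β ζ‖) atTop atTop := by
    apply tendsto_atTop_mono hnorm0
    have h1 : Tendsto (fun ζ => ‖c₁‖ * Real.exp (θ * K ζ)) atTop atTop :=
      hexp.const_mul_atTop (norm_pos_iff.mpr hc₁)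
    have h2 : Tendsto (fun ζ => -(‖c₂‖ * Real.exp (-(θ * K ζ)))) atTop
        (nhds (-(‖c₂‖ * 0))) := (hexp'.const_mul _).neg
    simpa [sub_eq_add_neg] using h1.atTop_add h2
  -- so eventually ‖β ζ‖ ≥ 1, contradicting L²
  obtain ⟨M, hM⟩ : ∃ M : ℝ, ∀ ζ ≥ M, (1:ℝ) ≤ ‖β ζ‖ := by
    have := hβtop.eventually (eventually_ge_atTop (1:ℝ))
    rw [eventually_atTop] at this
    exact this
  have hInt : Integrable (fun x => ‖β x‖ ^ ((2:ENNReal).toReal)) volume :=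
    hL2.integrable_norm_rpow (by norm_num) (by norm_num)
  have hfin : volume {x : ℝ | (1:ℝ) ≤ ‖β x‖ ^ ((2:ENNReal).toReal)} < ⊤ :=
    hInt.measure_ge_lt_top one_pos
  have hsub : Set.Ici M ⊆ {x : ℝ | (1:ℝ) ≤ ‖β x‖ ^ ((2:ENNReal).toReal)} := by
    intro ζ hζ
    have h1 := hM ζ hζ
    have h2 : (1:ℝ) ^ ((2:ENNReal).toReal) ≤ ‖β ζ‖ ^ ((2:ENNReal).toReal) :=
      Real.rpow_le_rpow zero_le_one h1 (by norm_num)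
    simpa using h2
  have hle := measure_mono (μ := volume) hsub
  rw [Real.volume_Ici] at hle
  exact absurd (lt_of_le_of_lt hle hfin) (by simp)
end

section
/- For each λ ∈ R, the 2×2 matrix ℳ(E, λ) = [[E + O₁(λ²), −conj(λ♯)·λ·𝔷 + O₂(λ²)], [−λ♯·λ·conj(𝔷) + O₃(λ²), E + O₄(λ²)]], where |Oⱼ(λ²)| ≤ Cλ² and λ♯ ≠ 0, 𝔷 ≠ 0, is singular for exactly two values E = E_±(λ) satisfying E_±(λ) = ±|λ♯||𝔷|·λ + O(λ²) as λ → 0. In particular the leading-order eigenvalue splitting is linear in λ with slope ±|λ♯||𝔷|. -/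
open Matrix

lemma aux_cpow_half_sq {z : ℂ} (hz : z ≠ 0) : (z ^ (1/2 : ℂ)) ^ 2 = z := by
  rw [sq, ← Complex.cpow_add _ _ hz]; norm_num

lemma aux_cpow_half_re_nonneg (z : ℂ) : 0 ≤ (z ^ (1/2 : ℂ)).re := by
  rcases eq_or_ne z 0 with h | h
  · simp [h, Complex.zero_cpow (by norm_num : (1/2:ℂ) ≠ 0)]
  · rw [Complex.cpow_def_of_ne_zero h, Complex.exp_re]
    have h1 : (Complex.log z * (1/2)).im = z.arg / 2 := by
      simp [Complex.mul_im, Complex.log_im]; ring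
    rw [h1]
    have h2 := Complex.neg_pi_lt_arg z
    have h3 := Complex.arg_le_pi z
    have : 0 ≤ Real.cos (z.arg / 2) :=
      Real.cos_nonneg_of_mem_Icc ⟨by linarith, by linarith⟩
    positivity

lemma aux_cabs_sub_le (x y : ℂ) : ‖x - y‖ ≤ ‖x‖ + ‖y‖ := by
  simpa using norm_sub_le x y

/-- for `λ♯ ≠ 0`, `𝔷 ≠ 0`, and functions `O₁,…,O₄` with `|Oⱼ(λ)| ≤ Cλ²`,
the 2×2 matrix
`ℳ(E, λ) = [[E + O₁(λ), −conj(λ♯) λ 𝔷 + O₂(λ)], [−λ♯ λ conj(𝔷) + O₃(λ), E + O₄(λ)]]`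
is, for each small `λ ≠ 0`, singular for exactly two values `E = E₊(λ), E₋(λ)` which
satisfy `E_±(λ) = ±|λ♯||𝔷| λ + O(λ²)` as `λ → 0`. -/
theorem two_by_two_eigenvalue_splitting
    (lamSharp fz : ℂ) (hlam : lamSharp ≠ 0) (hfz : fz ≠ 0)
    (C : ℝ) (hC : 0 < C)
    (O₁ O₂ O₃ O₄ : ℝ → ℂ)
    (hO₁ : ∀ t : ℝ, ‖O₁ t‖ ≤ C * t ^ 2)
    (hO₂ : ∀ t : ℝ, ‖O₂ t‖ ≤ C * t ^ 2)
    (hO₃ : ∀ t : ℝ, ‖O₃ t‖ ≤ C * t ^ 2)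
    (hO₄ : ∀ t : ℝ, ‖O₄ t‖ ≤ C * t ^ 2) :
    ∃ ε > 0, ∃ C' > 0, ∃ Ep Em : ℝ → ℂ, ∀ t : ℝ, 0 < |t| → |t| < ε →
      Ep t ≠ Em t ∧
      (∀ E : ℂ,
        (!![E + O₁ t, -(starRingEnd ℂ lamSharp) * (t : ℂ) * fz + O₂ t;
           -lamSharp * (t : ℂ) * (starRingEnd ℂ fz) + O₃ t, E + O₄ t]).det = 0 ↔
          E = Ep t ∨ E = Em t) ∧
      ‖Ep t - ((‖lamSharp‖ * ‖fz‖ * t : ℝ) : ℂ)‖ ≤ C' * t ^ 2 ∧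
      ‖Em t + ((‖lamSharp‖ * ‖fz‖ * t : ℝ) : ℂ)‖ ≤ C' * t ^ 2 := by
  set a : ℝ := ‖lamSharp‖ * ‖fz‖ with ha_def
  have ha : 0 < a := mul_pos (norm_pos_iff.mpr hlam) (norm_pos_iff.mpr hfz)
  set K : ℝ := 12*C^2 + 8*a*C with hK_def
  have hK : 0 < K := by positivity
  set Df : ℝ → ℂ := fun t => (O₁ t + O₄ t)^2 - 4*(O₁ t * O₄ t) +
      4*((-(starRingEnd ℂ lamSharp) * (t:ℂ) * fz + O₂ t) *
         (-lamSharp * (t:ℂ) * (starRingEnd ℂ fz) + O₃ t)) with hDf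
  set sf : ℝ → ℂ := fun t => (if 0 ≤ t then 1 else -1) * (Df t) ^ (1/2 : ℂ) with hsf
  have ha2 : ((a:ℝ):ℂ)^2 = lamSharp * (starRingEnd ℂ lamSharp) * (fz * (starRingEnd ℂ fz)) := by
    rw [ha_def]; push_cast
    rw [mul_pow, Complex.mul_conj, Complex.mul_conj, Complex.normSq_eq_norm_sq, Complex.normSq_eq_norm_sq]
    push_cast
    ring
  refine ⟨min 1 (a^2/K), lt_min one_pos (by positivity), K/(4*a) + C, by positivity,
    fun t => (-(O₁ t + O₄ t) + sf t)/2, fun t => (-(O₁ t + O₄ t) - sf t)/2,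
    fun t ht0 hte => ?_⟩
  have htne : t ≠ 0 := fun h => by simp [h] at ht0
  have hT1 : |t| ≤ 1 := le_of_lt (lt_of_lt_of_le hte (min_le_left _ _))
  have hTK : |t| ≤ a^2/K := le_of_lt (lt_of_lt_of_le hte (min_le_right _ _))
  have ht2 : |t|^2 = t^2 := sq_abs t
  -- key algebraic identity
  have hkey : Df t - (2*(a:ℂ)*(t:ℂ))^2 =
      (O₁ t + O₄ t)^2 - 4*(O₁ t*O₄ t) - 4*((starRingEnd ℂ lamSharp)*(t:ℂ)*fz*O₃ t)
      - 4*(lamSharp*(t:ℂ)*(starRingEnd ℂ fz)*O₂ t) + 4*(O₂ t*O₃ t) := by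
    simp only [hDf]
    linear_combination (-(4:ℂ)*(t:ℂ)^2) * ha2
  -- bounds on the error terms
  have hA1 : ‖(O₁ t + O₄ t)^2‖ ≤ (2*C*t^2)^2 := by
    rw [norm_pow]
    have hb : ‖O₁ t + O₄ t‖ ≤ 2*C*t^2 := by
      calc ‖O₁ t + O₄ t‖ ≤ ‖O₁ t‖ + ‖O₄ t‖ :=
        norm_add_le _ _
      _ ≤ 2*C*t^2 := by linarith [hO₁ t, hO₄ t]
    exact pow_le_pow_left₀ (norm_nonneg _) hb 2
  have hA2 : ‖4*(O₁ t * O₄ t)‖ ≤ 4*((C*t^2)*(C*t^2)) := by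
    rw [norm_mul, norm_mul, Complex.norm_ofNat]
    gcongr
    · exact hO₁ t
    · exact hO₄ t
  have hA3 : ‖4*((starRingEnd ℂ lamSharp)*(t:ℂ)*fz*O₃ t)‖ ≤
      4*(‖lamSharp‖ * |t| * ‖fz‖ * (C*t^2)) := by
    rw [norm_mul, norm_mul, norm_mul, norm_mul, Complex.norm_ofNat, Complex.norm_conj,
      Complex.norm_real, Real.norm_eq_abs]
    gcongr
    exact hO₃ t
  have hA4 : ‖4*(lamSharp*(t:ℂ)*(starRingEnd ℂ fz)*O₂ t)‖ ≤
      4*(‖lamSharp‖ * |t| * ‖fz‖ * (C*t^2)) := by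
    rw [norm_mul, norm_mul, norm_mul, norm_mul, Complex.norm_ofNat, Complex.norm_conj,
      Complex.norm_real, Real.norm_eq_abs]
    gcongr
    exact hO₂ t
  have hA5 : ‖4*(O₂ t * O₃ t)‖ ≤ 4*((C*t^2)*(C*t^2)) := by
    rw [norm_mul, norm_mul, Complex.norm_ofNat]
    gcongr
    · exact hO₂ t
    · exact hO₃ t
  have hRb : ‖Df t - (2*(a:ℂ)*(t:ℂ))^2‖ ≤ K * |t|^3 := by
    rw [hkey]
    have tri : ‖(O₁ t + O₄ t)^2 - 4*(O₁ t*O₄ t)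
        - 4*((starRingEnd ℂ lamSharp)*(t:ℂ)*fz*O₃ t)
        - 4*(lamSharp*(t:ℂ)*(starRingEnd ℂ fz)*O₂ t) + 4*(O₂ t*O₃ t)‖ ≤
        ‖(O₁ t + O₄ t)^2‖ + ‖4*(O₁ t*O₄ t)‖
        + ‖4*((starRingEnd ℂ lamSharp)*(t:ℂ)*fz*O₃ t)‖
        + ‖4*(lamSharp*(t:ℂ)*(starRingEnd ℂ fz)*O₂ t)‖
        + ‖4*(O₂ t*O₃ t)‖ := by
      calc _ ≤ ‖(O₁ t + O₄ t)^2 - 4*(O₁ t*O₄ t)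
            - 4*((starRingEnd ℂ lamSharp)*(t:ℂ)*fz*O₃ t)
            - 4*(lamSharp*(t:ℂ)*(starRingEnd ℂ fz)*O₂ t)‖ + ‖4*(O₂ t*O₃ t)‖ :=
          norm_add_le _ _
      _ ≤ _ := by
          have h1 := aux_cabs_sub_le ((O₁ t + O₄ t)^2 - 4*(O₁ t*O₄ t)
            - 4*((starRingEnd ℂ lamSharp)*(t:ℂ)*fz*O₃ t))
            (4*(lamSharp*(t:ℂ)*(starRingEnd ℂ fz)*O₂ t))
          have h2 := aux_cabs_sub_le ((O₁ t + O₄ t)^2 - 4*(O₁ t*O₄ t))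
            (4*((starRingEnd ℂ lamSharp)*(t:ℂ)*fz*O₃ t))
          have h3 := aux_cabs_sub_le ((O₁ t + O₄ t)^2) (4*(O₁ t*O₄ t))
          linarith
    have ht4 : t^4 ≤ |t|^3 := by
      calc t^4 = |t|^4 := by rw [show t^4 = (t^2)^2 from by ring, ← ht2]; ring
      _ ≤ |t|^3 := pow_le_pow_of_le_one (abs_nonneg t) hT1 (by norm_num)
    have htt : |t| * t^2 = |t|^3 := by rw [← ht2]; ring
    have hc4 : C^2 * t^4 ≤ C^2 * |t|^3 := mul_le_mul_of_nonneg_left ht4 (sq_nonneg C)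
    have f1 : ‖(O₁ t + O₄ t)^2‖ ≤ 4*(C^2*|t|^3) := by
      have e1 : (2*C*t^2)^2 = 4*(C^2*t^4) := by ring
      rw [e1] at hA1; linarith
    have f2 : ‖4*(O₁ t*O₄ t)‖ ≤ 4*(C^2*|t|^3) := by
      have e2 : 4*((C*t^2)*(C*t^2)) = 4*(C^2*t^4) := by ring
      rw [e2] at hA2; linarith
    have f5 : ‖4*(O₂ t*O₃ t)‖ ≤ 4*(C^2*|t|^3) := by
      have e2 : 4*((C*t^2)*(C*t^2)) = 4*(C^2*t^4) := by ring
      rw [e2] at hA5; linarith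
    have e3 : 4*(‖lamSharp‖ * |t| * ‖fz‖ * (C*t^2)) = 4*(a*C*|t|^3) := by
      rw [ha_def, ← htt]; ring
    have f3 := hA3.trans_eq e3
    have f4 := hA4.trans_eq e3
    calc _ ≤ _ := tri
    _ ≤ K * |t|^3 := by rw [hK_def]; linarith
  -- lower bound on |D|
  have h1 : ‖(2*(a:ℂ)*(t:ℂ))^2‖ = 4*a^2*t^2 := by
    rw [norm_pow, norm_mul, norm_mul, Complex.norm_two, Complex.norm_real, Complex.norm_real, Real.norm_eq_abs, Real.norm_eq_abs,
      abs_of_pos ha, mul_pow, mul_pow, sq_abs]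
    ring
  have hDlow : 3*a^2*t^2 ≤ ‖Df t‖ := by
    have h2 : ‖(2*(a:ℂ)*(t:ℂ))^2‖ ≤
        ‖Df t‖ + ‖Df t - (2*(a:ℂ)*(t:ℂ))^2‖ := by
      have := aux_cabs_sub_le (Df t) (Df t - (2*(a:ℂ)*(t:ℂ))^2)
      have heq : Df t - (Df t - (2*(a:ℂ)*(t:ℂ))^2) = (2*(a:ℂ)*(t:ℂ))^2 := by ring
      rw [heq] at this; exact this
    rw [h1] at h2
    have hK3 : K*|t|^3 ≤ a^2*t^2 := by
      have h4 : K*|t| ≤ a^2 := (le_div_iff₀' hK).mp hTK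
      calc K*|t|^3 = (K*|t|)*|t|^2 := by ring
      _ ≤ a^2*|t|^2 := mul_le_mul_of_nonneg_right h4 (sq_nonneg _)
      _ = a^2*t^2 := by rw [ht2]
    linarith [hRb]
  have hDne : Df t ≠ 0 := by
    intro h
    rw [h, norm_zero] at hDlow
    have h0 : 0 < t^2 := ht2 ▸ pow_pos ht0 2
    nlinarith [mul_pos (pow_pos ha 2) h0]
  -- square root and its estimate
  set r : ℂ := (Df t) ^ (1/2 : ℂ) with hr_def
  have hr2 : r ^ 2 = Df t := aux_cpow_half_sq hDne
  have hrre : 0 ≤ r.re := aux_cpow_half_re_nonneg (Df t)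
  have hts : ((|t| : ℝ):ℂ)^2 = ((t:ℝ):ℂ)^2 := by
    norm_cast
  have hfac : ‖r - ((2*a*|t| : ℝ):ℂ)‖ * ‖r + ((2*a*|t| : ℝ):ℂ)‖ =
      ‖Df t - (2*(a:ℂ)*(t:ℂ))^2‖ := by
    rw [← norm_mul]
    congr 1
    push_cast
    linear_combination hr2 - 4*((a:ℝ):ℂ)^2 * hts
  have hrp : 2*a*|t| ≤ ‖r + ((2*a*|t| : ℝ):ℂ)‖ := by
    have h5 : (r + ((2*a*|t| : ℝ):ℂ)).re = r.re + 2*a*|t| := by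
      simp [Complex.add_re, Complex.ofReal_re]
    have := Complex.re_le_norm (r + ((2*a*|t| : ℝ):ℂ))
    rw [h5] at this
    linarith
  have hrM : ‖r - ((2*a*|t| : ℝ):ℂ)‖ ≤ K/(2*a) * t^2 := by
    have h2a : (0:ℝ) < 2*a*|t| := by positivity
    have h3 : ‖r - ((2*a*|t| : ℝ):ℂ)‖ * (2*a*|t|) ≤ K*|t|^3 := by
      calc ‖r - ((2*a*|t| : ℝ):ℂ)‖ * (2*a*|t|)
          ≤ ‖r - ((2*a*|t| : ℝ):ℂ)‖ * ‖r + ((2*a*|t| : ℝ):ℂ)‖ := by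
            gcongr
      _ = _ := hfac
      _ ≤ _ := hRb
    have heq : K/(2*a) * t^2 * (2*a*|t|) = K * |t|^3 := by
      have h2a' : (2*a) ≠ 0 := by positivity
      calc K/(2*a) * t^2 * (2*a*|t|) = K * (t^2*|t|) * ((2*a)/(2*a)) := by ring
      _ = K * (t^2*|t|) := by rw [div_self h2a', mul_one]
      _ = K*|t|^3 := by rw [← ht2]; ring
    refine le_of_mul_le_mul_right ?_ h2a
    rw [heq]; exact h3
  -- estimate for the signed square root
  have hsub : ‖sf t - ((2*a*t : ℝ):ℂ)‖ ≤ K/(2*a) * t^2 := by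
    by_cases hts0 : 0 ≤ t
    · have habt : (2*a*t : ℝ) = 2*a*|t| := by rw [abs_of_nonneg hts0]
      simp only [hsf, if_pos hts0, one_mul, habt]
      exact hrM
    · have habt : (2*a*|t| : ℝ) = -(2*a*t) := by
        rw [abs_of_neg (lt_of_not_ge hts0)]; ring
      simp only [hsf, if_neg hts0]
      have heq2 : (-1:ℂ) * (Df t ^ (1/2:ℂ)) - ((2*a*t : ℝ):ℂ) =
          -(r - ((2*a*|t| : ℝ):ℂ)) := by
        rw [hr_def, habt]; push_cast; ring
      rw [heq2, norm_neg]
      exact hrM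
  have hsq : sf t ^ 2 = Df t := by
    simp only [hsf, mul_pow]
    have h6 : ((if 0 ≤ t then (1:ℂ) else -1))^2 = 1 := by split <;> norm_num
    rw [h6, one_mul]
    exact aux_cpow_half_sq hDne
  have hrne : r ≠ 0 := by
    intro h
    apply hDne
    rw [← hr2, h]; ring
  have hsne : sf t ≠ 0 := by
    simp only [hsf]
    refine mul_ne_zero ?_ hrne
    split <;> norm_num
  refine ⟨?_, ?_, ?_, ?_⟩
  · intro h
    exact hsne (by linear_combination h)
  · intro E
    have hdet : (!![E + O₁ t, -(starRingEnd ℂ lamSharp) * (t : ℂ) * fz + O₂ t;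
           -lamSharp * (t : ℂ) * (starRingEnd ℂ fz) + O₃ t, E + O₄ t]).det =
        (E - (-(O₁ t + O₄ t) + sf t)/2) * (E - (-(O₁ t + O₄ t) - sf t)/2) := by
      rw [Matrix.det_fin_two_of]
      have hsq' := hsq
      simp only [hDf] at hsq'
      linear_combination ((1:ℂ)/4) * hsq'
    rw [hdet, mul_eq_zero, sub_eq_zero, sub_eq_zero]
  · have hrw : (-(O₁ t + O₄ t) + sf t)/2 - ((a*t : ℝ):ℂ) =
        (sf t - ((2*a*t:ℝ):ℂ))/2 - (O₁ t + O₄ t)/2 := by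
      push_cast; ring
    rw [hrw]
    calc ‖(sf t - ((2*a*t:ℝ):ℂ))/2 - (O₁ t + O₄ t)/2‖
        ≤ ‖(sf t - ((2*a*t:ℝ):ℂ))/2‖ + ‖(O₁ t + O₄ t)/2‖ :=
          aux_cabs_sub_le _ _
      _ ≤ (K/(2*a)*t^2)/2 + (2*C*t^2)/2 := by
          rw [norm_div, norm_div, Complex.norm_two]
          gcongr
          calc ‖O₁ t + O₄ t‖ ≤ ‖O₁ t‖ + ‖O₄ t‖ :=
            norm_add_le _ _
          _ ≤ 2*C*t^2 := by linarith [hO₁ t, hO₄ t]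
      _ = (K/(4*a) + C) * t^2 := by field_simp; ring
  · have hrw : (-(O₁ t + O₄ t) - sf t)/2 + ((a*t : ℝ):ℂ) =
        -((sf t - ((2*a*t:ℝ):ℂ))/2 + (O₁ t + O₄ t)/2) := by
      push_cast; ring
    rw [hrw, norm_neg]
    calc ‖(sf t - ((2*a*t:ℝ):ℂ))/2 + (O₁ t + O₄ t)/2‖
        ≤ ‖(sf t - ((2*a*t:ℝ):ℂ))/2‖ + ‖(O₁ t + O₄ t)/2‖ :=
          norm_add_le _ _
      _ ≤ (K/(2*a)*t^2)/2 + (2*C*t^2)/2 := by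
          rw [norm_div, norm_div, Complex.norm_two]
          gcongr
          calc ‖O₁ t + O₄ t‖ ≤ ‖O₁ t‖ + ‖O₄ t‖ :=
            norm_add_le _ _
          _ ≤ 2*C*t^2 := by linarith [hO₁ t, hO₄ t]
      _ = (K/(4*a) + C) * t^2 := by field_simp; ring
end
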